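/- Let u∥ be a real-valued planar flow with Fourier support on a circle of radius λ > 0 in a plane P through the origin (as in the previous statement), let ω be the scalar function with ∇ × u∥ = λ ω e⊥, and let Q be a polynomial with real coefficients. Then the vector field u(x) = u∥(x) + (Q(ω(x)) − ⟨Q(ω)⟩) e⊥, where ⟨Q(ω)⟩ is the mean (zero Fourier mode) of Q(ω), is a stationary solution of the incompressible Euler equations: (u · ∇)u is a gradient field and ∇ · u = 0. -/

import Mathlib

open scoped Classical

noncomputable section

abbrev V3 := Fin 3 → ℝ
abbrev C3 := Fin 3 → ℂ

/-- Canonical inclusion of real vectors into `ℂ³`. -/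
def toC (v : V3) : C3 := fun i => (v i : ℂ)

/-- Real dot product. -/
def dotR (u v : V3) : ℝ := ∑ i, u i * v i

/-- ℂ-bilinear dot product on `ℂ³`. -/
def dotC (u v : C3) : ℂ := ∑ i, u i * v i

/-- Euclidean norm of a vector of `ℝ³`. -/
def norm3 (v : V3) : ℝ := Real.sqrt (dotR v v)

/-- Cross product on `ℝ³`. -/
def crossR (u v : V3) : V3 :=
  ![u 1 * v 2 - u 2 * v 1, u 2 * v 0 - u 0 * v 2, u 0 * v 1 - u 1 * v 0]

/-- ℂ-bilinear cross product on `ℂ³`. -/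
def crossC (u v : C3) : C3 :=
  ![u 1 * v 2 - u 2 * v 1, u 2 * v 0 - u 0 * v 2, u 0 * v 1 - u 1 * v 0]

/-- Orthogonal projection of `ℂ³` onto `{v : m · v = 0}` (for a real frequency `m`). -/
def projC (m : V3) (v : C3) : C3 :=
  v - (dotC (toC m) v / ((dotR m m : ℝ) : ℂ)) • toC m

/-- Rodrigues rotation formula (unit axis `a`, cosine `c`, sine `s`). -/
def rodriguesR (a : V3) (c s : ℝ) (v : V3) : V3 :=
  c • v + s • crossR a v + ((1 - c) * dotR a v) • a

/-- Complexified Rodrigues rotation formula; since the coefficients are real this acts on the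
real and imaginary parts separately. -/
def rodriguesC (a : C3) (c s : ℂ) (v : C3) : C3 :=
  c • v + s • crossC a v + ((1 - c) * dotC a v) • a

/-- The rotation `R_{ω₁ ↦ ω₂}` around the axis `ω₁ × ω₂` by the angle `θ ∈ (0,π)` with
`cos θ = ω₁ · ω₂` (for unit vectors `ω₁ ≠ ±ω₂`, so that `sin θ = |ω₁ × ω₂|`). -/
def geoRot (ω₁ ω₂ : V3) (v : V3) : V3 :=
  rodriguesR ((norm3 (crossR ω₁ ω₂))⁻¹ • crossR ω₁ ω₂) (dotR ω₁ ω₂) (norm3 (crossR ω₁ ω₂)) v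

/-- The rotation `R_{ω₁ ↦ ω₂}` extended complex-linearly to `ℂ³`. -/
def geoRotC (ω₁ ω₂ : V3) (v : C3) : C3 :=
  rodriguesC (toC ((norm3 (crossR ω₁ ω₂))⁻¹ • crossR ω₁ ω₂)) ((dotR ω₁ ω₂ : ℝ) : ℂ)
    ((norm3 (crossR ω₁ ω₂) : ℝ) : ℂ) v

/-- Rotation around the unit axis `a` by the angle `α`, extended complex-linearly to `ℂ³`. -/
def axisRotC (a : V3) (α : ℝ) (v : C3) : C3 :=
  rodriguesC (toC a) ((Real.cos α : ℝ) : ℂ) ((Real.sin α : ℝ) : ℂ) v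

/-- `e∥(n) = e⊥ × (n/|n|)`. -/
def ePar (ePerp : V3) (n : V3) : V3 := crossR ePerp ((norm3 n)⁻¹ • n)

/-- Partial derivative of a real-valued function on `ℝ³`. -/
def pderivR (f : V3 → ℝ) (i : Fin 3) (x : V3) : ℝ := fderiv ℝ f x (Pi.single i 1)

/-- Partial derivative of a complex-valued function on `ℝ³`. -/
def pderivC (f : V3 → ℂ) (i : Fin 3) (x : V3) : ℂ := fderiv ℝ f x (Pi.single i 1)

/-- Curl of a real vector field on `ℝ³`. -/
def curlR (u : V3 → V3) (x : V3) : V3 :=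
  ![pderivR (fun y => u y 2) 1 x - pderivR (fun y => u y 1) 2 x,
    pderivR (fun y => u y 0) 2 x - pderivR (fun y => u y 2) 0 x,
    pderivR (fun y => u y 1) 0 x - pderivR (fun y => u y 0) 1 x]

/-- Curl of a complex vector field on `ℝ³`. -/
def curlC (u : V3 → C3) (x : V3) : C3 :=
  ![pderivC (fun y => u y 2) 1 x - pderivC (fun y => u y 1) 2 x,
    pderivC (fun y => u y 0) 2 x - pderivC (fun y => u y 2) 0 x,
    pderivC (fun y => u y 1) 0 x - pderivC (fun y => u y 0) 1 x]

/-- Real and imaginary parts of a complex vector, as real vectors. -/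
def reV (u : C3) : V3 := fun i => (u i).re
def imV (u : C3) : V3 := fun i => (u i).im

/-! ### Auxiliary machinery -/

/-- The continuous linear map `v ↦ dotR n v`. -/
def dotCLM (n : V3) : V3 →L[ℝ] ℝ := ∑ i, n i • ContinuousLinearMap.proj i

lemma dotCLM_apply (n v : V3) : dotCLM n v = dotR n v := by
  simp [dotCLM, dotR, ContinuousLinearMap.sum_apply]

lemma dotR_single (n : V3) (i : Fin 3) : dotR n (Pi.single i 1) = n i := by
  simp [dotR, Pi.single_apply]

/-- The basic complex exponential `e^{i n·x}`. -/
def expF (n x : V3) : ℂ := Complex.exp (Complex.I * ((dotR n x : ℝ) : ℂ))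

lemma hasFDerivAt_expF_smul (c : ℂ) (n x : V3) :
    HasFDerivAt (fun y => c * expF n y)
      ((c * expF n x * Complex.I) • (Complex.ofRealCLM.comp (dotCLM n))) x := by
  have h1 : HasFDerivAt (fun y : V3 => dotR n y) (dotCLM n) x := by
    have he : (fun y : V3 => dotR n y) = ⇑(dotCLM n) := by
      funext y; rw [dotCLM_apply]
    rw [he]; exact (dotCLM n).hasFDerivAt
  have h2 : HasFDerivAt (fun y : V3 => ((dotR n y : ℝ) : ℂ))
      (Complex.ofRealCLM.comp (dotCLM n)) x := Complex.ofRealCLM.hasFDerivAt.comp x h1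
  have h3 : HasFDerivAt (fun y : V3 => Complex.I * ((dotR n y : ℝ) : ℂ))
      (Complex.I • (Complex.ofRealCLM.comp (dotCLM n))) x := h2.const_mul _
  have h4 := (Complex.hasDerivAt_exp (Complex.I * ((dotR n x : ℝ) : ℂ))).comp_hasFDerivAt x h3
  have h5 : HasFDerivAt (fun y => expF n y)
      ((expF n x) • (Complex.I • (Complex.ofRealCLM.comp (dotCLM n)))) x := h4
  have h6 := h5.const_mul c
  simpa [smul_smul, mul_assoc] using h6

/-- The derivative of the real part of a trigonometric sum. -/
def DC (S : Finset V3) (c : V3 → ℂ) (x : V3) : V3 →L[ℝ] ℝ :=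
  Complex.reCLM.comp
    (∑ n ∈ S, (c n * expF n x * Complex.I) • (Complex.ofRealCLM.comp (dotCLM n)))

lemma hasFDerivAt_DC (S : Finset V3) (c : V3 → ℂ) (x : V3) :
    HasFDerivAt (fun y => (∑ n ∈ S, c n * expF n y).re) (DC S c x) x := by
  have h : HasFDerivAt (fun y => ∑ n ∈ S, c n * expF n y)
      (∑ n ∈ S, (c n * expF n x * Complex.I) • (Complex.ofRealCLM.comp (dotCLM n))) x :=
    HasFDerivAt.fun_sum fun n _ => hasFDerivAt_expF_smul (c n) n x
  exact Complex.reCLM.hasFDerivAt.comp x h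

lemma DC_single (S : Finset V3) (c : V3 → ℂ) (x : V3) (i : Fin 3) :
    DC S c x (Pi.single i 1)
      = (∑ n ∈ S, c n * expF n x * (Complex.I * ((n i : ℝ) : ℂ))).re := by
  simp only [DC, ContinuousLinearMap.comp_apply, ContinuousLinearMap.sum_apply,
    ContinuousLinearMap.smul_apply, Complex.ofRealCLM_apply, dotCLM_apply, dotR_single,
    Complex.reCLM_apply]
  congr 1
  refine Finset.sum_congr rfl fun n _ => ?_
  simp [smul_eq_mul, mul_assoc]

lemma pderiv_DC (S : Finset V3) (c : V3 → ℂ) (i : Fin 3) (x : V3) :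
    pderivR (fun y => (∑ n ∈ S, c n * expF n y).re) i x
      = (∑ n ∈ S, c n * expF n x * (Complex.I * ((n i : ℝ) : ℂ))).re := by
  rw [pderivR, (hasFDerivAt_DC S c x).fderiv, DC_single]

lemma dotR_self_eq (n : V3) (lam : ℝ) (hlam : 0 < lam) (hc : norm3 n = lam) :
    dotR n n = lam ^ 2 := by
  have h0 : 0 ≤ dotR n n := by
    simp only [dotR, Fin.sum_univ_three]
    nlinarith [sq_nonneg (n 0), sq_nonneg (n 1), sq_nonneg (n 2)]
  rw [norm3] at hc
  nlinarith [Real.sq_sqrt h0, Real.sqrt_nonneg (dotR n n)]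

lemma curl_coeff (ePerp n : V3) (lam : ℝ) (hlam : 0 < lam)
    (hp : dotR n ePerp = 0) (hc : norm3 n = lam) :
    (n 1 * (crossR ePerp (lam⁻¹ • n)) 2 - n 2 * (crossR ePerp (lam⁻¹ • n)) 1 = lam * ePerp 0)
    ∧ (n 2 * (crossR ePerp (lam⁻¹ • n)) 0 - n 0 * (crossR ePerp (lam⁻¹ • n)) 2 = lam * ePerp 1)
    ∧ (n 0 * (crossR ePerp (lam⁻¹ • n)) 1 - n 1 * (crossR ePerp (lam⁻¹ • n)) 0
        = lam * ePerp 2) := by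
  have hnn := dotR_self_eq n lam hlam hc
  simp only [dotR, Fin.sum_univ_three] at hp hnn
  simp only [crossR, Pi.smul_apply, smul_eq_mul, Matrix.cons_val_zero, Matrix.cons_val_one,
    Matrix.head_cons, Matrix.cons_val_two, Matrix.tail_cons]
  have hl : lam ≠ 0 := hlam.ne'
  refine ⟨?_, ?_, ?_⟩
  · have h : n 1 * (ePerp 0 * (lam⁻¹ * n 1) - ePerp 1 * (lam⁻¹ * n 0))
        - n 2 * (ePerp 2 * (lam⁻¹ * n 0) - ePerp 0 * (lam⁻¹ * n 2))
        = lam⁻¹ * (ePerp 0 * (n 0 * n 0 + n 1 * n 1 + n 2 * n 2)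
            - n 0 * (n 0 * ePerp 0 + n 1 * ePerp 1 + n 2 * ePerp 2)) := by ring
    rw [h, hnn, hp]; field_simp; ring
  · have h : n 2 * (ePerp 1 * (lam⁻¹ * n 2) - ePerp 2 * (lam⁻¹ * n 1))
        - n 0 * (ePerp 0 * (lam⁻¹ * n 1) - ePerp 1 * (lam⁻¹ * n 0))
        = lam⁻¹ * (ePerp 1 * (n 0 * n 0 + n 1 * n 1 + n 2 * n 2)
            - n 1 * (n 0 * ePerp 0 + n 1 * ePerp 1 + n 2 * ePerp 2)) := by ring
    rw [h, hnn, hp]; field_simp; ring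
  · have h : n 0 * (ePerp 2 * (lam⁻¹ * n 0) - ePerp 0 * (lam⁻¹ * n 2))
        - n 1 * (ePerp 1 * (lam⁻¹ * n 2) - ePerp 2 * (lam⁻¹ * n 1))
        = lam⁻¹ * (ePerp 2 * (n 0 * n 0 + n 1 * n 1 + n 2 * n 2)
            - n 2 * (n 0 * ePerp 0 + n 1 * ePerp 1 + n 2 * ePerp 2)) := by ring
    rw [h, hnn, hp]; field_simp; ring

lemma final_alg {e0 e1 e2 A0 A1 A2 P00 P01 P02 P10 P11 P12 P20 P21 P22 lam w : ℝ}
    (f q' : ℝ) (hlam : lam ≠ 0)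
    (hc0 : P12 - P21 = lam * w * e0) (hc1 : P20 - P02 = lam * w * e1)
    (hc2 : P01 - P10 = lam * w * e2)
    (hd0 : e0 * P00 + e1 * P10 + e2 * P20 = 0) (hd1 : e0 * P01 + e1 * P11 + e2 * P21 = 0)
    (hd2 : e0 * P02 + e1 * P12 + e2 * P22 = 0)
    (hf : e0 * A0 + e1 * A1 + e2 * A2 = 0) (hee : e0 * e0 + e1 * e1 + e2 * e2 = 1) :
    ((lam⁻¹ * (e1 * A2 - e2 * A1) + f * e0) * (P00 + q' * (-A0) * e0)
      + (lam⁻¹ * (e2 * A0 - e0 * A2) + f * e1) * (P10 + q' * (-A1) * e0)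
      + (lam⁻¹ * (e0 * A1 - e1 * A0) + f * e2) * (P20 + q' * (-A2) * e0)
      = lam⁻¹ * (e1 * A2 - e2 * A1) * P00 + lam⁻¹ * (e2 * A0 - e0 * A2) * P01
        + lam⁻¹ * (e0 * A1 - e1 * A0) * P02 + w * (-A0))
    ∧ ((lam⁻¹ * (e1 * A2 - e2 * A1) + f * e0) * (P01 + q' * (-A0) * e1)
      + (lam⁻¹ * (e2 * A0 - e0 * A2) + f * e1) * (P11 + q' * (-A1) * e1)
      + (lam⁻¹ * (e0 * A1 - e1 * A0) + f * e2) * (P21 + q' * (-A2) * e1)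
      = lam⁻¹ * (e1 * A2 - e2 * A1) * P10 + lam⁻¹ * (e2 * A0 - e0 * A2) * P11
        + lam⁻¹ * (e0 * A1 - e1 * A0) * P12 + w * (-A1))
    ∧ ((lam⁻¹ * (e1 * A2 - e2 * A1) + f * e0) * (P02 + q' * (-A0) * e2)
      + (lam⁻¹ * (e2 * A0 - e0 * A2) + f * e1) * (P12 + q' * (-A1) * e2)
      + (lam⁻¹ * (e0 * A1 - e1 * A0) + f * e2) * (P22 + q' * (-A2) * e2)
      = lam⁻¹ * (e1 * A2 - e2 * A1) * P20 + lam⁻¹ * (e2 * A0 - e0 * A2) * P21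
        + lam⁻¹ * (e0 * A1 - e1 * A0) * P22 + w * (-A2)) := by
  have hmu : lam⁻¹ * lam = 1 := inv_mul_cancel₀ hlam
  refine ⟨?_, ?_, ?_⟩
  · linear_combination (-(lam⁻¹ * (e2 * A0 - e0 * A2))) * hc2
      + (lam⁻¹ * (e0 * A1 - e1 * A0)) * hc1 + f * hd0
      + (-(f * q' * e0) + lam * w * lam⁻¹ * e0) * hf + (-(lam * w * lam⁻¹ * A0)) * hee
      + (-(w * A0)) * hmu
  · linear_combination (-(lam⁻¹ * (e0 * A1 - e1 * A0))) * hc0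
      + (lam⁻¹ * (e1 * A2 - e2 * A1)) * hc2 + f * hd1
      + (-(f * q' * e1) + lam * w * lam⁻¹ * e1) * hf + (-(lam * w * lam⁻¹ * A1)) * hee
      + (-(w * A1)) * hmu
  · linear_combination (-(lam⁻¹ * (e1 * A2 - e2 * A1))) * hc1
      + (lam⁻¹ * (e2 * A0 - e0 * A2)) * hc0 + f * hd2
      + (-(f * q' * e2) + lam * w * lam⁻¹ * e2) * hf + (-(lam * w * lam⁻¹ * A2)) * hee
      + (-(w * A2)) * hmu


lemma sum_div_uPar (S : Finset V3) (α : V3 → ℂ) (ePerp : V3) (lam : ℝ) (x : V3) :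
    (∑ n ∈ S, (α n * (((crossR ePerp (lam⁻¹ • n)) 0 : ℝ) : ℂ)) * expF n x
        * (Complex.I * ((n 0 : ℝ) : ℂ))).re
      + (∑ n ∈ S, (α n * (((crossR ePerp (lam⁻¹ • n)) 1 : ℝ) : ℂ)) * expF n x
        * (Complex.I * ((n 1 : ℝ) : ℂ))).re
      + (∑ n ∈ S, (α n * (((crossR ePerp (lam⁻¹ • n)) 2 : ℝ) : ℂ)) * expF n x
        * (Complex.I * ((n 2 : ℝ) : ℂ))).re = 0 := by
  rw [← Complex.add_re, ← Complex.add_re, ← Finset.sum_add_distrib, ← Finset.sum_add_distrib]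
  have h : (∑ n ∈ S,
      ((α n * (((crossR ePerp (lam⁻¹ • n)) 0 : ℝ) : ℂ)) * expF n x * (Complex.I * ((n 0 : ℝ) : ℂ))
        + (α n * (((crossR ePerp (lam⁻¹ • n)) 1 : ℝ) : ℂ)) * expF n x * (Complex.I * ((n 1 : ℝ) : ℂ))
        + (α n * (((crossR ePerp (lam⁻¹ • n)) 2 : ℝ) : ℂ)) * expF n x * (Complex.I * ((n 2 : ℝ) : ℂ)))) = 0 := by
    refine Finset.sum_eq_zero fun n _ => ?_
    have h0 : n 0 * (crossR ePerp (lam⁻¹ • n)) 0 + n 1 * (crossR ePerp (lam⁻¹ • n)) 1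
        + n 2 * (crossR ePerp (lam⁻¹ • n)) 2 = 0 := by
      simp only [crossR, Pi.smul_apply, smul_eq_mul, Matrix.cons_val_zero, Matrix.cons_val_one,
        Matrix.head_cons, Matrix.cons_val_two, Matrix.tail_cons]
      ring
    have h0' := congrArg (fun r : ℝ => (r : ℂ)) h0
    push_cast at h0'
    linear_combination (α n * expF n x * Complex.I) * h0'
  rw [h, Complex.zero_re]

lemma sum_perp_col (S : Finset V3) (α : V3 → ℂ) (ePerp : V3) (lam : ℝ)
    (hplane : ∀ n ∈ S, dotR n ePerp = 0) (x : V3) (k : Fin 3) :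
    ePerp 0 * (∑ n ∈ S, (α n * (((crossR ePerp (lam⁻¹ • n)) k : ℝ) : ℂ)) * expF n x
        * (Complex.I * ((n 0 : ℝ) : ℂ))).re
      + ePerp 1 * (∑ n ∈ S, (α n * (((crossR ePerp (lam⁻¹ • n)) k : ℝ) : ℂ)) * expF n x
        * (Complex.I * ((n 1 : ℝ) : ℂ))).re
      + ePerp 2 * (∑ n ∈ S, (α n * (((crossR ePerp (lam⁻¹ • n)) k : ℝ) : ℂ)) * expF n x
        * (Complex.I * ((n 2 : ℝ) : ℂ))).re = 0 := by
  rw [← Complex.re_ofReal_mul, ← Complex.re_ofReal_mul, ← Complex.re_ofReal_mul,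
    ← Complex.add_re, ← Complex.add_re, Finset.mul_sum, Finset.mul_sum, Finset.mul_sum,
    ← Finset.sum_add_distrib, ← Finset.sum_add_distrib]
  have h : (∑ n ∈ S,
      (((ePerp 0 : ℝ) : ℂ) * ((α n * (((crossR ePerp (lam⁻¹ • n)) k : ℝ) : ℂ)) * expF n x
          * (Complex.I * ((n 0 : ℝ) : ℂ)))
        + ((ePerp 1 : ℝ) : ℂ) * ((α n * (((crossR ePerp (lam⁻¹ • n)) k : ℝ) : ℂ)) * expF n x
          * (Complex.I * ((n 1 : ℝ) : ℂ)))
        + ((ePerp 2 : ℝ) : ℂ) * ((α n * (((crossR ePerp (lam⁻¹ • n)) k : ℝ) : ℂ)) * expF n x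
          * (Complex.I * ((n 2 : ℝ) : ℂ))))) = 0 := by
    refine Finset.sum_eq_zero fun n hn => ?_
    have hp : n 0 * ePerp 0 + n 1 * ePerp 1 + n 2 * ePerp 2 = 0 := by
      simpa [dotR, Fin.sum_univ_three] using hplane n hn
    have hp' := congrArg (fun r : ℝ => (r : ℂ)) hp
    push_cast at hp'
    linear_combination (α n * (((crossR ePerp (lam⁻¹ • n)) k : ℝ) : ℂ) * expF n x
      * Complex.I) * hp'
  rw [h, Complex.zero_re]

lemma sum_perp_A (S : Finset V3) (α : V3 → ℂ) (ePerp : V3)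
    (hplane : ∀ n ∈ S, dotR n ePerp = 0) (x : V3) :
    ePerp 0 * (∑ n ∈ S, α n * expF n x * ((n 0 : ℝ) : ℂ)).re
      + ePerp 1 * (∑ n ∈ S, α n * expF n x * ((n 1 : ℝ) : ℂ)).re
      + ePerp 2 * (∑ n ∈ S, α n * expF n x * ((n 2 : ℝ) : ℂ)).re = 0 := by
  rw [← Complex.re_ofReal_mul, ← Complex.re_ofReal_mul, ← Complex.re_ofReal_mul,
    ← Complex.add_re, ← Complex.add_re, Finset.mul_sum, Finset.mul_sum, Finset.mul_sum,
    ← Finset.sum_add_distrib, ← Finset.sum_add_distrib]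
  have h : (∑ n ∈ S,
      (((ePerp 0 : ℝ) : ℂ) * (α n * expF n x * ((n 0 : ℝ) : ℂ))
        + ((ePerp 1 : ℝ) : ℂ) * (α n * expF n x * ((n 1 : ℝ) : ℂ))
        + ((ePerp 2 : ℝ) : ℂ) * (α n * expF n x * ((n 2 : ℝ) : ℂ)))) = 0 := by
    refine Finset.sum_eq_zero fun n hn => ?_
    have hp : n 0 * ePerp 0 + n 1 * ePerp 1 + n 2 * ePerp 2 = 0 := by
      simpa [dotR, Fin.sum_univ_three] using hplane n hn
    have hp' := congrArg (fun r : ℝ => (r : ℂ)) hp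
    push_cast at hp'
    linear_combination (α n * expF n x) * hp'
  rw [h, Complex.zero_re]

lemma sum_Ialpha (S : Finset V3) (α : V3 → ℂ) (x : V3) (j : Fin 3) :
    (∑ n ∈ S, (Complex.I * α n) * expF n x * (Complex.I * ((n j : ℝ) : ℂ))).re
      = -(∑ n ∈ S, α n * expF n x * ((n j : ℝ) : ℂ)).re := by
  rw [← Complex.neg_re, ← Finset.sum_neg_distrib]
  congr 1
  refine Finset.sum_congr rfl fun n _ => ?_
  linear_combination (α n * expF n x * ((n j : ℝ) : ℂ)) * Complex.I_mul_I

lemma sum_curl (S : Finset V3) (α : V3 → ℂ) (ePerp : V3) (lam : ℝ) (hlam : 0 < lam)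
    (hplane : ∀ n ∈ S, dotR n ePerp = 0) (hcirc : ∀ n ∈ S, norm3 n = lam) (x : V3) :
    ((∑ n ∈ S, (α n * (((crossR ePerp (lam⁻¹ • n)) 2 : ℝ) : ℂ)) * expF n x
        * (Complex.I * ((n 1 : ℝ) : ℂ))).re
      - (∑ n ∈ S, (α n * (((crossR ePerp (lam⁻¹ • n)) 1 : ℝ) : ℂ)) * expF n x
        * (Complex.I * ((n 2 : ℝ) : ℂ))).re
      = lam * (∑ n ∈ S, (Complex.I * α n) * expF n x).re * ePerp 0)
    ∧ ((∑ n ∈ S, (α n * (((crossR ePerp (lam⁻¹ • n)) 0 : ℝ) : ℂ)) * expF n x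
        * (Complex.I * ((n 2 : ℝ) : ℂ))).re
      - (∑ n ∈ S, (α n * (((crossR ePerp (lam⁻¹ • n)) 2 : ℝ) : ℂ)) * expF n x
        * (Complex.I * ((n 0 : ℝ) : ℂ))).re
      = lam * (∑ n ∈ S, (Complex.I * α n) * expF n x).re * ePerp 1)
    ∧ ((∑ n ∈ S, (α n * (((crossR ePerp (lam⁻¹ • n)) 1 : ℝ) : ℂ)) * expF n x
        * (Complex.I * ((n 0 : ℝ) : ℂ))).re
      - (∑ n ∈ S, (α n * (((crossR ePerp (lam⁻¹ • n)) 0 : ℝ) : ℂ)) * expF n x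
        * (Complex.I * ((n 1 : ℝ) : ℂ))).re
      = lam * (∑ n ∈ S, (Complex.I * α n) * expF n x).re * ePerp 2) := by
  refine ⟨?_, ?_, ?_⟩
  · rw [← Complex.sub_re, ← Finset.sum_sub_distrib]
    have h : (∑ n ∈ S,
        ((α n * (((crossR ePerp (lam⁻¹ • n)) 2 : ℝ) : ℂ)) * expF n x * (Complex.I * ((n 1 : ℝ) : ℂ))
          - (α n * (((crossR ePerp (lam⁻¹ • n)) 1 : ℝ) : ℂ)) * expF n x * (Complex.I * ((n 2 : ℝ) : ℂ))))
        = ((lam * ePerp 0 : ℝ) : ℂ) * (∑ n ∈ S, (Complex.I * α n) * expF n x) := by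
      rw [Finset.mul_sum]
      refine Finset.sum_congr rfl fun n hn => ?_
      have hcc := (curl_coeff ePerp n lam hlam (hplane n hn) (hcirc n hn)).1
      have hcc' := congrArg (fun r : ℝ => (r : ℂ)) hcc
      push_cast at hcc' ⊢
      linear_combination (α n * expF n x * Complex.I) * hcc'
    rw [h, Complex.re_ofReal_mul]; ring
  · rw [← Complex.sub_re, ← Finset.sum_sub_distrib]
    have h : (∑ n ∈ S,
        ((α n * (((crossR ePerp (lam⁻¹ • n)) 0 : ℝ) : ℂ)) * expF n x * (Complex.I * ((n 2 : ℝ) : ℂ))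
          - (α n * (((crossR ePerp (lam⁻¹ • n)) 2 : ℝ) : ℂ)) * expF n x * (Complex.I * ((n 0 : ℝ) : ℂ))))
        = ((lam * ePerp 1 : ℝ) : ℂ) * (∑ n ∈ S, (Complex.I * α n) * expF n x) := by
      rw [Finset.mul_sum]
      refine Finset.sum_congr rfl fun n hn => ?_
      have hcc := (curl_coeff ePerp n lam hlam (hplane n hn) (hcirc n hn)).2.1
      have hcc' := congrArg (fun r : ℝ => (r : ℂ)) hcc
      push_cast at hcc' ⊢
      linear_combination (α n * expF n x * Complex.I) * hcc'
    rw [h, Complex.re_ofReal_mul]; ring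
  · rw [← Complex.sub_re, ← Finset.sum_sub_distrib]
    have h : (∑ n ∈ S,
        ((α n * (((crossR ePerp (lam⁻¹ • n)) 1 : ℝ) : ℂ)) * expF n x * (Complex.I * ((n 0 : ℝ) : ℂ))
          - (α n * (((crossR ePerp (lam⁻¹ • n)) 0 : ℝ) : ℂ)) * expF n x * (Complex.I * ((n 1 : ℝ) : ℂ))))
        = ((lam * ePerp 2 : ℝ) : ℂ) * (∑ n ∈ S, (Complex.I * α n) * expF n x) := by
      rw [Finset.mul_sum]
      refine Finset.sum_congr rfl fun n hn => ?_
      have hcc := (curl_coeff ePerp n lam hlam (hplane n hn) (hcirc n hn)).2.2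
      have hcc' := congrArg (fun r : ℝ => (r : ℂ)) hcc
      push_cast at hcc' ⊢
      linear_combination (α n * expF n x * Complex.I) * hcc'
    rw [h, Complex.re_ofReal_mul]; ring

lemma sum_uPar_val (S : Finset V3) (α : V3 → ℂ) (ePerp : V3) (lam : ℝ) (x : V3) :
    ((∑ n ∈ S, (α n * (((crossR ePerp (lam⁻¹ • n)) 0 : ℝ) : ℂ)) * expF n x).re
      = lam⁻¹ * (ePerp 1 * (∑ n ∈ S, α n * expF n x * ((n 2 : ℝ) : ℂ)).re
          - ePerp 2 * (∑ n ∈ S, α n * expF n x * ((n 1 : ℝ) : ℂ)).re))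
    ∧ ((∑ n ∈ S, (α n * (((crossR ePerp (lam⁻¹ • n)) 1 : ℝ) : ℂ)) * expF n x).re
      = lam⁻¹ * (ePerp 2 * (∑ n ∈ S, α n * expF n x * ((n 0 : ℝ) : ℂ)).re
          - ePerp 0 * (∑ n ∈ S, α n * expF n x * ((n 2 : ℝ) : ℂ)).re))
    ∧ ((∑ n ∈ S, (α n * (((crossR ePerp (lam⁻¹ • n)) 2 : ℝ) : ℂ)) * expF n x).re
      = lam⁻¹ * (ePerp 0 * (∑ n ∈ S, α n * expF n x * ((n 1 : ℝ) : ℂ)).re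
          - ePerp 1 * (∑ n ∈ S, α n * expF n x * ((n 0 : ℝ) : ℂ)).re)) := by
  refine ⟨?_, ?_, ?_⟩
  · have h : (∑ n ∈ S, (α n * (((crossR ePerp (lam⁻¹ • n)) 0 : ℝ) : ℂ)) * expF n x)
        = ((lam⁻¹ * ePerp 1 : ℝ) : ℂ) * (∑ n ∈ S, α n * expF n x * ((n 2 : ℝ) : ℂ))
          - ((lam⁻¹ * ePerp 2 : ℝ) : ℂ) * (∑ n ∈ S, α n * expF n x * ((n 1 : ℝ) : ℂ)) := by
      rw [Finset.mul_sum, Finset.mul_sum, ← Finset.sum_sub_distrib]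
      refine Finset.sum_congr rfl fun n _ => ?_
      have hcr : (crossR ePerp (lam⁻¹ • n)) 0
          = lam⁻¹ * ePerp 1 * n 2 - lam⁻¹ * ePerp 2 * n 1 := by
        simp only [crossR, Pi.smul_apply, smul_eq_mul, Matrix.cons_val_zero, Matrix.cons_val_one,
          Matrix.head_cons, Matrix.cons_val_two, Matrix.tail_cons]
        ring
      have hcr' := congrArg (fun r : ℝ => (r : ℂ)) hcr
      push_cast at hcr' ⊢
      linear_combination (α n * expF n x) * hcr'
    rw [h, Complex.sub_re, Complex.re_ofReal_mul, Complex.re_ofReal_mul]; ring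
  · have h : (∑ n ∈ S, (α n * (((crossR ePerp (lam⁻¹ • n)) 1 : ℝ) : ℂ)) * expF n x)
        = ((lam⁻¹ * ePerp 2 : ℝ) : ℂ) * (∑ n ∈ S, α n * expF n x * ((n 0 : ℝ) : ℂ))
          - ((lam⁻¹ * ePerp 0 : ℝ) : ℂ) * (∑ n ∈ S, α n * expF n x * ((n 2 : ℝ) : ℂ)) := by
      rw [Finset.mul_sum, Finset.mul_sum, ← Finset.sum_sub_distrib]
      refine Finset.sum_congr rfl fun n _ => ?_
      have hcr : (crossR ePerp (lam⁻¹ • n)) 1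
          = lam⁻¹ * ePerp 2 * n 0 - lam⁻¹ * ePerp 0 * n 2 := by
        simp only [crossR, Pi.smul_apply, smul_eq_mul, Matrix.cons_val_zero, Matrix.cons_val_one,
          Matrix.head_cons, Matrix.cons_val_two, Matrix.tail_cons]
        ring
      have hcr' := congrArg (fun r : ℝ => (r : ℂ)) hcr
      push_cast at hcr' ⊢
      linear_combination (α n * expF n x) * hcr'
    rw [h, Complex.sub_re, Complex.re_ofReal_mul, Complex.re_ofReal_mul]; ring
  · have h : (∑ n ∈ S, (α n * (((crossR ePerp (lam⁻¹ • n)) 2 : ℝ) : ℂ)) * expF n x)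
        = ((lam⁻¹ * ePerp 0 : ℝ) : ℂ) * (∑ n ∈ S, α n * expF n x * ((n 1 : ℝ) : ℂ))
          - ((lam⁻¹ * ePerp 1 : ℝ) : ℂ) * (∑ n ∈ S, α n * expF n x * ((n 0 : ℝ) : ℂ)) := by
      rw [Finset.mul_sum, Finset.mul_sum, ← Finset.sum_sub_distrib]
      refine Finset.sum_congr rfl fun n _ => ?_
      have hcr : (crossR ePerp (lam⁻¹ • n)) 2
          = lam⁻¹ * ePerp 0 * n 1 - lam⁻¹ * ePerp 1 * n 0 := by
        simp only [crossR, Pi.smul_apply, smul_eq_mul, Matrix.cons_val_zero, Matrix.cons_val_one,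
          Matrix.head_cons, Matrix.cons_val_two, Matrix.tail_cons]
        ring
      have hcr' := congrArg (fun r : ℝ => (r : ℂ)) hcr
      push_cast at hcr' ⊢
      linear_combination (α n * expF n x) * hcr'
    rw [h, Complex.sub_re, Complex.re_ofReal_mul, Complex.re_ofReal_mul]; ring


/-- If `u∥` is a real planar flow with Fourier support on a circle of radius
`λ > 0` in a plane `P` through the origin, `ω` is the scalar with `∇ × u∥ = λ ω e⊥`, and `Q` is
a real polynomial, then `u = u∥ + (Q(ω) − c) e⊥` (where `c` is any constant, e.g. the mean of
`Q(ω)`) is a stationary Euler flow: `∇ · u = 0` and `(u · ∇)u` is a gradient field. -/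
theorem planar_flow_with_polynomial_vertical_component_stationary
    (ePerp : V3) (hunit : norm3 ePerp = 1) (lam : ℝ) (hlam : 0 < lam)
    (S : Finset V3)
    (hplane : ∀ n ∈ S, dotR n ePerp = 0)
    (hcirc : ∀ n ∈ S, norm3 n = lam)
    (hsymm : ∀ n ∈ S, -n ∈ S)
    (α : V3 → ℂ) (hα : ∀ n ∈ S, α (-n) = -(starRingEnd ℂ) (α n))
    (Q : Polynomial ℝ) (cst : ℝ) :
    let uPar : V3 → V3 := fun x k =>
      (∑ n ∈ S, α n * Complex.exp (Complex.I * ((dotR n x : ℝ) : ℂ)) *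
        (((crossR ePerp (lam⁻¹ • n)) k : ℝ) : ℂ)).re
    let ω : V3 → ℝ := fun x =>
      (∑ n ∈ S, Complex.I * α n * Complex.exp (Complex.I * ((dotR n x : ℝ) : ℂ))).re
    let u : V3 → V3 := fun x k => uPar x k + (Q.eval (ω x) - cst) * ePerp k
    (∀ x, ∑ i, pderivR (fun y => u y i) i x = 0) ∧
    (∃ pr : V3 → ℝ, ∀ x k,
      (∑ j, u x j * pderivR (fun y => u y k) j x) = pderivR pr k x) := by
  intro uPar ω u
  have hωd : ω = fun y => (∑ n ∈ S, (Complex.I * α n) * expF n y).re := rfl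
  have hωx : ∀ y, ω y = (∑ n ∈ S, (Complex.I * α n) * expF n y).re := fun _ => rfl
  have huPd : ∀ k : Fin 3, (fun y : V3 => uPar y k)
      = fun y => (∑ n ∈ S, (α n * (((crossR ePerp (lam⁻¹ • n)) k : ℝ) : ℂ)) * expF n y).re := by
    intro k; funext y
    show (∑ n ∈ S, α n * Complex.exp (Complex.I * ((dotR n y : ℝ) : ℂ)) *
        (((crossR ePerp (lam⁻¹ • n)) k : ℝ) : ℂ)).re = _
    congr 1
    refine Finset.sum_congr rfl fun n _ => ?_
    rw [expF]; ring
  have huPx : ∀ (k : Fin 3) (y : V3), uPar y k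
      = (∑ n ∈ S, (α n * (((crossR ePerp (lam⁻¹ • n)) k : ℝ) : ℂ)) * expF n y).re :=
    fun k y => congrFun (huPd k) y
  have hUP : ∀ (k : Fin 3) (x : V3), HasFDerivAt (fun y => uPar y k)
      (DC S (fun n => α n * (((crossR ePerp (lam⁻¹ • n)) k : ℝ) : ℂ)) x) x := by
    intro k x; rw [huPd k]; exact hasFDerivAt_DC _ _ _
  have hWD : ∀ x : V3, HasFDerivAt ω (DC S (fun n => Complex.I * α n) x) x := by
    intro x; rw [hωd]; exact hasFDerivAt_DC _ _ _
  have hPval : ∀ (j k : Fin 3) (x : V3), pderivR (fun y => uPar y k) j x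
      = (∑ n ∈ S, (α n * (((crossR ePerp (lam⁻¹ • n)) k : ℝ) : ℂ)) * expF n x
          * (Complex.I * ((n j : ℝ) : ℂ))).re := by
    intro j k x; rw [huPd k]; exact pderiv_DC _ _ _ _
  have hWval : ∀ (j : Fin 3) (x : V3), pderivR ω j x
      = -(∑ n ∈ S, α n * expF n x * ((n j : ℝ) : ℂ)).re := by
    intro j x; rw [hωd, pderiv_DC]; exact sum_Ialpha S α x j
  have hQd : ∀ x : V3, HasFDerivAt (fun y => Q.eval (ω y))
      ((Q.derivative.eval (ω x)) • DC S (fun n => Complex.I * α n) x) x :=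
    fun x => (Q.hasDerivAt (ω x)).comp_hasFDerivAt x (hWD x)
  have hud : ∀ (k : Fin 3) (x : V3), HasFDerivAt (fun y => u y k)
      (DC S (fun n => α n * (((crossR ePerp (lam⁻¹ • n)) k : ℝ) : ℂ)) x
        + ePerp k • ((Q.derivative.eval (ω x)) • DC S (fun n => Complex.I * α n) x)) x :=
    fun k x => (hUP k x).add (((hQd x).sub_const cst).mul_const (ePerp k))
  have huval : ∀ (j k : Fin 3) (x : V3), pderivR (fun y => u y k) j x
      = pderivR (fun y => uPar y k) j x + Q.derivative.eval (ω x) * pderivR ω j x * ePerp k := by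
    intro j k x
    rw [pderivR, (hud k x).fderiv, pderivR, (hUP k x).fderiv, pderivR, (hWD x).fderiv]
    simp only [ContinuousLinearMap.add_apply, ContinuousLinearMap.smul_apply, smul_eq_mul]
    ring
  have huv : ∀ (x : V3) (k : Fin 3), u x k = uPar x k + (Q.eval (ω x) - cst) * ePerp k :=
    fun _ _ => rfl
  have hee : ePerp 0 * ePerp 0 + ePerp 1 * ePerp 1 + ePerp 2 * ePerp 2 = 1 := by
    have h := dotR_self_eq ePerp 1 one_pos hunit
    simpa [dotR, Fin.sum_univ_three] using h
  constructor
  · -- divergence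
    intro x
    rw [Fin.sum_univ_three, huval 0 0 x, huval 1 1 x, huval 2 2 x,
      hPval 0 0 x, hPval 1 1 x, hPval 2 2 x, hWval 0 x, hWval 1 x, hWval 2 x]
    have h1 := sum_div_uPar S α ePerp lam x
    have h2 := sum_perp_A S α ePerp hplane x
    linear_combination h1 - Q.derivative.eval (ω x) * h2
  · -- gradient part
    refine ⟨fun y => (uPar y 0 * uPar y 0 + uPar y 1 * uPar y 1 + uPar y 2 * uPar y 2
      + ω y * ω y) * (1/2), ?_⟩
    intro x k
    have hbig := ((((hUP 0 x).mul (hUP 0 x)).add ((hUP 1 x).mul (hUP 1 x))).add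
      ((hUP 2 x).mul (hUP 2 x))).add ((hWD x).mul (hWD x))
    have hpr := hbig.mul_const (1/2 : ℝ)
    have hprval : ∀ k : Fin 3, pderivR (fun y => (uPar y 0 * uPar y 0 + uPar y 1 * uPar y 1
          + uPar y 2 * uPar y 2 + ω y * ω y) * (1/2)) k x
        = uPar x 0 * (∑ n ∈ S, (α n * (((crossR ePerp (lam⁻¹ • n)) 0 : ℝ) : ℂ)) * expF n x
            * (Complex.I * ((n k : ℝ) : ℂ))).re
          + uPar x 1 * (∑ n ∈ S, (α n * (((crossR ePerp (lam⁻¹ • n)) 1 : ℝ) : ℂ)) * expF n x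
            * (Complex.I * ((n k : ℝ) : ℂ))).re
          + uPar x 2 * (∑ n ∈ S, (α n * (((crossR ePerp (lam⁻¹ • n)) 2 : ℝ) : ℂ)) * expF n x
            * (Complex.I * ((n k : ℝ) : ℂ))).re
          + ω x * (∑ n ∈ S, (Complex.I * α n) * expF n x * (Complex.I * ((n k : ℝ) : ℂ))).re := by
      intro k
      rw [pderivR, (show HasFDerivAt (fun y => (uPar y 0 * uPar y 0 + uPar y 1 * uPar y 1
          + uPar y 2 * uPar y 2 + ω y * ω y) * (1/2)) _ x from hpr).fderiv]
      simp only [ContinuousLinearMap.smul_apply, ContinuousLinearMap.add_apply, DC_single,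
        smul_eq_mul]
      ring
    obtain ⟨hcc0, hcc1, hcc2⟩ := sum_curl S α ePerp lam hlam hplane hcirc x
    rw [← hωx x] at hcc0 hcc1 hcc2
    have hdd0 := sum_perp_col S α ePerp lam hplane x 0
    have hdd1 := sum_perp_col S α ePerp lam hplane x 1
    have hdd2 := sum_perp_col S α ePerp lam hplane x 2
    have hffA := sum_perp_A S α ePerp hplane x
    obtain ⟨hv0, hv1, hv2⟩ := sum_uPar_val S α ePerp lam x
    obtain ⟨G0, G1, G2⟩ := final_alg (Q.eval (ω x) - cst) (Q.derivative.eval (ω x)) hlam.ne'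
      hcc0 hcc1 hcc2 hdd0 hdd1 hdd2 hffA hee
    have h3 : k = 0 ∨ k = 1 ∨ k = 2 := by
      rcases k with ⟨v, hv⟩
      interval_cases v
      · left; rfl
      · right; left; rfl
      · right; right; rfl
    rcases h3 with rfl | rfl | rfl
    · rw [Fin.sum_univ_three, huv x 0, huv x 1, huv x 2,
        huval 0 0 x, huval 1 0 x, huval 2 0 x,
        hPval 0 0 x, hPval 1 0 x, hPval 2 0 x,
        hWval 0 x, hWval 1 x, hWval 2 x,
        hprval 0, sum_Ialpha S α x 0,
        huPx 0 x, huPx 1 x, huPx 2 x, hv0, hv1, hv2]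
      linear_combination G0
    · rw [Fin.sum_univ_three, huv x 0, huv x 1, huv x 2,
        huval 0 1 x, huval 1 1 x, huval 2 1 x,
        hPval 0 1 x, hPval 1 1 x, hPval 2 1 x,
        hWval 0 x, hWval 1 x, hWval 2 x,
        hprval 1, sum_Ialpha S α x 1,
        huPx 0 x, huPx 1 x, huPx 2 x, hv0, hv1, hv2]
      linear_combination G1
    · rw [Fin.sum_univ_three, huv x 0, huv x 1, huv x 2,
        huval 0 2 x, huval 1 2 x, huval 2 2 x,
        hPval 0 2 x, hPval 1 2 x, hPval 2 2 x,
        hWval 0 x, hWval 1 x, hWval 2 x,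
        hprval 2, sum_Ialpha S α x 2,
        huPx 0 x, huPx 1 x, huPx 2 x, hv0, hv1, hv2]
      linear_combination G2
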